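/- Let k ≥ 1 and let A = (0, α_1, α_2, …) be a sequence of nonnegative reals. Suppose there exists l ≥ 3 such that α_j ≥ 1 for 1 ≤ j ≤ l and α_j = 0 for j ≥ l+1. Then the sequence ω_{n,A}^{(k)} = ∫_{[0,1]^k} (x_1⋯x_k)(x_1⋯x_k + α_1)⋯(x_1⋯x_k + α_{n−1}) dx_1⋯dx_k (n ≥ 1) is unimodal with its peak at n = l+1: ω_{n,A}^{(k)} ≤ ω_{n+1,A}^{(k)} for 1 ≤ n ≤ l, and ω_{n,A}^{(k)} ≥ ω_{n+1,A}^{(k)} for n ≥ l+1. -/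

import Mathlib

open MeasureTheory

/-- Integral of `f (x₁ ⋯ x_k)` over the unit cube `[0,1]^k`. -/
noncomputable def cubeInt (k : ℕ) (f : ℝ → ℝ) : ℝ :=
  ∫ x : Fin k → ℝ in Set.univ.pi fun _ => Set.Icc (0:ℝ) 1, f (∏ i, x i)

lemma cubeInt_mono (k : ℕ) (f g : ℝ → ℝ) (hf : Continuous f) (hg : Continuous g)
    (h : ∀ p ∈ Set.Icc (0:ℝ) 1, f p ≤ g p) : cubeInt k f ≤ cubeInt k g := by
  have hmeas : MeasurableSet (Set.univ.pi fun _ : Fin k => Set.Icc (0:ℝ) 1) :=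
    MeasurableSet.univ_pi fun _ => measurableSet_Icc
  have hcomp : IsCompact (Set.univ.pi fun _ : Fin k => Set.Icc (0:ℝ) 1) :=
    isCompact_univ_pi fun _ => isCompact_Icc
  have hcf : Continuous fun x : Fin k → ℝ => f (∏ i, x i) :=
    hf.comp (continuous_finset_prod _ fun i _ => continuous_apply i)
  have hcg : Continuous fun x : Fin k → ℝ => g (∏ i, x i) :=
    hg.comp (continuous_finset_prod _ fun i _ => continuous_apply i)
  refine setIntegral_mono_on (hcf.continuousOn.integrableOn_compact hcomp)
    (hcg.continuousOn.integrableOn_compact hcomp) hmeas ?_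
  intro x hx
  have hx' : ∀ i, x i ∈ Set.Icc (0:ℝ) 1 := fun i => hx i (Set.mem_univ i)
  refine h _ ⟨Finset.prod_nonneg fun i _ => (hx' i).1,
    Finset.prod_le_one (fun i _ => (hx' i).1) (fun i _ => (hx' i).2)⟩

lemma cont_aux (α : ℕ → ℝ) (m : ℕ) :
    Continuous fun p : ℝ => p * ∏ i ∈ Finset.range m, (p + α (i + 1)) :=
  continuous_id.mul (continuous_finset_prod _ fun i _ => continuous_id.add continuous_const)

/-- If `α j ≥ 1` for `1 ≤ j ≤ l` and `α j = 0` for `j ≥ l + 1` (with `l ≥ 3`,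
`α 0 = 0`, all `α j ≥ 0`), then `ω n = ∫_{[0,1]^k} p(p+α₁)⋯(p+α_{n−1})` is
unimodal with peak at `l + 1`. -/
theorem stmt_10 (k : ℕ) (hk : 0 < k) (α : ℕ → ℝ) (hα0 : α 0 = 0)
    (hnn : ∀ j, 0 ≤ α j) (l : ℕ) (hl : 3 ≤ l)
    (h1 : ∀ j : ℕ, 1 ≤ j → j ≤ l → 1 ≤ α j)
    (h0 : ∀ j : ℕ, l + 1 ≤ j → α j = 0)
    (ω : ℕ → ℝ)
    (hω : ∀ n, ω n = cubeInt k fun p => p * ∏ i ∈ Finset.range (n - 1), (p + α (i + 1))) :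
    (∀ n : ℕ, 1 ≤ n → n ≤ l → ω n ≤ ω (n + 1)) ∧
      (∀ n : ℕ, l + 1 ≤ n → ω (n + 1) ≤ ω n) := by
  have key : ∀ n : ℕ, 1 ≤ n → ∀ p ∈ Set.Icc (0:ℝ) 1,
      (p * ∏ i ∈ Finset.range ((n + 1) - 1), (p + α (i + 1)))
        = (p * ∏ i ∈ Finset.range (n - 1), (p + α (i + 1))) * (p + α n) := by
    intro n hn p _
    have hn' : (n + 1) - 1 = (n - 1) + 1 := by omega
    rw [hn', Finset.prod_range_succ]
    have : n - 1 + 1 = n := by omega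
    rw [this]; ring
  have fnn : ∀ n : ℕ, ∀ p ∈ Set.Icc (0:ℝ) 1,
      0 ≤ p * ∏ i ∈ Finset.range (n - 1), (p + α (i + 1)) := by
    intro n p hp
    exact mul_nonneg hp.1 (Finset.prod_nonneg fun i _ => add_nonneg hp.1 (hnn _))
  constructor
  · intro n hn hnl
    rw [hω n, hω (n + 1)]
    refine cubeInt_mono k _ _ (cont_aux α _) (cont_aux α _) ?_
    intro p hp
    rw [key n hn p hp]
    have h1' : 1 ≤ p + α n := le_add_of_nonneg_of_le hp.1 (h1 n hn hnl)
    nlinarith [fnn n p hp]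
  · intro n hn
    rw [hω n, hω (n + 1)]
    refine cubeInt_mono k _ _ (cont_aux α _) (cont_aux α _) ?_
    intro p hp
    rw [key n (by omega) p hp, h0 n hn]
    have := fnn n p hp
    nlinarith [hp.2]
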